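/- For every s with 1/2 ≤ s ≤ 1, -(1/2)(s - s⁻¹) + log s ≤ (2/3)(1-s)³. -/

import Mathlib

theorem stmt4 (s : ℝ) (hs1 : 1 / 2 ≤ s) (hs2 : s ≤ 1) :
    -(1 / 2) * (s - s⁻¹) + Real.log s ≤ 2 / 3 * (1 - s) ^ 3 := by
  set g : ℝ → ℝ := fun x => 2 / 3 * (1 - x) ^ 3 + 1 / 2 * (x - x⁻¹) - Real.log x with hg
  have hder : ∀ x ∈ Set.Ioo (1/2 : ℝ) 1, HasDerivAt g
      (-2 * (1 - x) ^ 2 + 1 / 2 * (1 + (x^2)⁻¹) - x⁻¹) x := by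
    intro x hx
    have hx0 : x ≠ 0 := by have := hx.1; positivity
    have h1 : HasDerivAt (fun y : ℝ => (1 - y) ^ 3) (3 * (1 - x) ^ 2 * (-1)) x := by
      have := ((hasDerivAt_id x).const_sub 1).pow 3
      exact this.congr_deriv (by simp)
    have h2 : HasDerivAt (fun y : ℝ => y - y⁻¹) (1 - (-(x^2)⁻¹)) x :=
      (hasDerivAt_id x).sub (hasDerivAt_inv hx0)
    have h3 : HasDerivAt Real.log x⁻¹ x := Real.hasDerivAt_log hx0
    have := ((h1.const_mul (2/3 : ℝ)).add (h2.const_mul (1/2 : ℝ))).sub h3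
    refine this.congr_deriv ?_
    ring
  have hanti : AntitoneOn g (Set.Icc (1/2 : ℝ) 1) := by
    apply antitoneOn_of_deriv_nonpos (convex_Icc _ _)
    · apply ContinuousOn.sub
      · apply ContinuousOn.add
        · fun_prop
        · apply ContinuousOn.mul continuousOn_const
          apply ContinuousOn.sub continuousOn_id
          apply ContinuousOn.inv₀ continuousOn_id
          intro x hx; have := hx.1; positivity
      · apply Real.continuousOn_log.mono
        intro x hx; simp; have := hx.1; positivity
    · intro x hx
      rw [interior_Icc] at hx
      exact (hder x hx).differentiableAt.differentiableWithinAt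
    · intro x hx
      rw [interior_Icc] at hx
      rw [(hder x hx).deriv]
      have hx0 : (0:ℝ) < x := lt_trans (by norm_num) hx.1
      have h1 : x⁻¹ * x = 1 := inv_mul_cancel₀ hx0.ne'
      have h2 : (x^2)⁻¹ * x^2 = 1 := inv_mul_cancel₀ (by positivity)
      have h3 : (0:ℝ) < x⁻¹ := by positivity
      have h4 : (0:ℝ) < (x^2)⁻¹ := by positivity
      have heq : -2 * (1 - x) ^ 2 + 1 / 2 * (1 + (x^2)⁻¹) - x⁻¹
          = (1 - x) ^ 2 * (1 - 4 * x ^ 2) * (x ^ 2)⁻¹ / 2 := by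
        field_simp
        ring
      rw [heq]
      have h5 : (1:ℝ) - 4 * x ^ 2 ≤ 0 := by nlinarith [hx.1.le]
      have h6 : (1 - x) ^ 2 * (1 - 4 * x ^ 2) ≤ 0 :=
        mul_nonpos_of_nonneg_of_nonpos (sq_nonneg _) h5
      have := mul_nonpos_of_nonpos_of_nonneg h6 h4.le
      linarith
  have h1mem : (1:ℝ) ∈ Set.Icc (1/2 : ℝ) 1 := by norm_num
  have hsmem : s ∈ Set.Icc (1/2 : ℝ) 1 := ⟨hs1, hs2⟩
  have := hanti hsmem h1mem hs2
  have hg1 : g 1 = 0 := by simp [hg]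
  rw [hg1] at this
  simp only [hg] at this
  linarith
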